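/- If e^{iλ} ∈ σ(U) for λ ∈ [0,2π), then the two one-dimensional subspaces of ℂ² appearing in the main theorem coincide: ker((∏_{i=0}^{n_+−1} T_i^+(λ) − ζ_+^<·I)·T_+) = ker((∏_{i=0}^{n_−−1} T_i^−(λ) − ζ_−^>·I)·T_−). -/

import Mathlib

open scoped Real

/-- The coin matrix `C = e^{iΔ}[[α, β], [−conj β, conj α]]`. -/
noncomputable def coinM (a b : ℂ) (d : ℝ) : Matrix (Fin 2) (Fin 2) ℂ :=
  Complex.exp (Complex.I * d) • !![a, b; -(starRingEnd ℂ b), starRingEnd ℂ a]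

/-- The transfer matrix `T(λ) = (1/α)[[e^{i(λ−Δ)}, −β], [−conj β, e^{−i(λ−Δ)}]]`. -/
noncomputable def transferM (a b : ℂ) (d l : ℝ) : Matrix (Fin 2) (Fin 2) ℂ :=
  a⁻¹ • !![Complex.exp (Complex.I * (l - d)), -b;
           -(starRingEnd ℂ b), Complex.exp (-(Complex.I * (l - d)))]

/-- Square-summability of `Ψ : ℤ → ℂ²`, i.e. `Σ_{x∈ℤ} ‖Ψ(x)‖²_{ℂ²} < ∞`. -/
def SqSummable (Ψ : ℤ → Fin 2 → ℂ) : Prop :=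
  Summable fun x : ℤ => ‖Ψ x 0‖ ^ 2 + ‖Ψ x 1‖ ^ 2

/-- The time evolution `U = SC`:  `(UΨ)(x) = ((C_{x+1}Ψ(x+1))_L, (C_{x−1}Ψ(x−1))_R)ᵀ`. -/
noncomputable def Uact (C : ℤ → Matrix (Fin 2) (Fin 2) ℂ) (Ψ : ℤ → Fin 2 → ℂ) :
    ℤ → Fin 2 → ℂ :=
  fun x => ![(C (x + 1)).mulVec (Ψ (x + 1)) 0, (C (x - 1)).mulVec (Ψ (x - 1)) 1]

/-- The inverse of the unitary `J`:  `(J⁻¹Ψ)(x) = (Ψ_L(x+1), Ψ_R(x))ᵀ`. -/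
def JinvAct (Ψ : ℤ → Fin 2 → ℂ) : ℤ → Fin 2 → ℂ := fun x => ![Ψ (x + 1) 0, Ψ x 1]

/-- Ordered product `∏_{i=0}^{n-1} T_i = T_{n-1} ⋯ T_1 T_0`. -/
noncomputable def prodRev (T : ℕ → Matrix (Fin 2) (Fin 2) ℂ) : ℕ → Matrix (Fin 2) (Fin 2) ℂ
  | 0 => 1
  | n + 1 => T n * prodRev T n

/-- `T_{n−1} T_{n−2} ⋯ T_1 T_0` for matrices indexed by `ℤ`. -/
noncomputable def prodZpos (T : ℤ → Matrix (Fin 2) (Fin 2) ℂ) :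
    ℕ → Matrix (Fin 2) (Fin 2) ℂ
  | 0 => 1
  | n + 1 => T n * prodZpos T n

/-- `T_{−n}⁻¹ T_{−n+1}⁻¹ ⋯ T_{−2}⁻¹ T_{−1}⁻¹` for matrices indexed by `ℤ`. -/
noncomputable def prodZneg (T : ℤ → Matrix (Fin 2) (Fin 2) ℂ) :
    ℕ → Matrix (Fin 2) (Fin 2) ℂ
  | 0 => 1
  | n + 1 => (T (-(n + 1 : ℕ)))⁻¹ * prodZneg T n

/-- `A = (1/2)·α_0⋯α_{n−1}·tr(∏_{i=0}^{n−1} T_i)` (a real number, taken via its real part). -/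
noncomputable def Adef (αs : ℕ → ℂ) (Ts : ℕ → Matrix (Fin 2) (Fin 2) ℂ) (n : ℕ) : ℝ :=
  ((1 / 2 : ℂ) * (∏ i ∈ Finset.range n, αs i) * (prodRev Ts n).trace).re

/-- `ζ^< = (A − sgn(A)·√(A² − |α_0|²⋯|α_{n−1}|²))/(α_0⋯α_{n−1})`. -/
noncomputable def zetaLT (αs : ℕ → ℂ) (Ts : ℕ → Matrix (Fin 2) (Fin 2) ℂ) (n : ℕ) : ℂ :=
  ((Adef αs Ts n : ℂ) -
      ((Real.sign (Adef αs Ts n) *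
        Real.sqrt ((Adef αs Ts n) ^ 2 - ∏ i ∈ Finset.range n, ‖αs i‖ ^ 2) : ℝ) : ℂ)) /
    ∏ i ∈ Finset.range n, αs i

/-- `ζ^> = (A + sgn(A)·√(A² − |α_0|²⋯|α_{n−1}|²))/(α_0⋯α_{n−1})`. -/
noncomputable def zetaGT (αs : ℕ → ℂ) (Ts : ℕ → Matrix (Fin 2) (Fin 2) ℂ) (n : ℕ) : ℂ :=
  ((Adef αs Ts n : ℂ) +
      ((Real.sign (Adef αs Ts n) *
        Real.sqrt ((Adef αs Ts n) ^ 2 - ∏ i ∈ Finset.range n, ‖αs i‖ ^ 2) : ℝ) : ℂ)) /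
    ∏ i ∈ Finset.range n, αs i


open Matrix Filter Finset

lemma fac2 (M : Matrix (Fin 2) (Fin 2) ℂ) (a b : ℂ) (hs : a + b = M.trace)
    (hp : a * b = M.det) : (M - a • 1) * (M - b • 1) = 0 := by
  ext i j
  rw [Matrix.trace_fin_two] at hs
  rw [Matrix.det_fin_two] at hp
  fin_cases i <;> fin_cases j <;>
    simp [Matrix.mul_apply, Fin.sum_univ_two, Matrix.one_apply] <;>
    first
      | linear_combination (-(M 0 0)) * hs + hp
      | linear_combination (-(M 0 1)) * hs
      | linear_combination (-(M 1 0)) * hs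
      | linear_combination (-(M 1 1)) * hs + hp

lemma mulVec_eq_zero_of_two (M : Matrix (Fin 2) (Fin 2) ℂ) (w u : Fin 2 → ℂ)
    (hw : M.mulVec w = 0) (hu : M.mulVec u = 0) (hdet : w 0 * u 1 - w 1 * u 0 ≠ 0) :
    M = 0 := by
  ext i j
  have h1 : M i 0 * w 0 + M i 1 * w 1 = 0 := by
    have := congrFun hw i; simpa [Matrix.mulVec, dotProduct, Fin.sum_univ_two] using this
  have h2 : M i 0 * u 0 + M i 1 * u 1 = 0 := by
    have := congrFun hu i; simpa [Matrix.mulVec, dotProduct, Fin.sum_univ_two] using this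
  have e0 : M i 0 * (w 0 * u 1 - w 1 * u 0) = 0 := by linear_combination u 1 * h1 - w 1 * h2
  have e1 : M i 1 * (w 0 * u 1 - w 1 * u 0) = 0 := by linear_combination w 0 * h2 - u 0 * h1
  fin_cases j
  · simpa using (mul_eq_zero.1 e0).resolve_right hdet
  · simpa using (mul_eq_zero.1 e1).resolve_right hdet

lemma ker_eq_span (M : Matrix (Fin 2) (Fin 2) ℂ) (w : Fin 2 → ℂ) (hw : w ≠ 0)
    (hM : M ≠ 0) (h : M.mulVec w = 0) :
    LinearMap.ker M.mulVecLin = Submodule.span ℂ {w} := by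
  apply le_antisymm
  · intro u hu
    have hu' : M.mulVec u = 0 := hu
    have hdet : w 0 * u 1 - w 1 * u 0 = 0 := by
      by_contra hne
      exact hM (mulVec_eq_zero_of_two M w u h hu' hne)
    have hw' : w 0 ≠ 0 ∨ w 1 ≠ 0 := by
      by_contra hc
      push_neg at hc
      exact hw (by funext i; fin_cases i <;> simp [hc.1, hc.2])
    rcases hw' with h0 | h1
    · have : u = (u 0 / w 0) • w := by
        funext i
        fin_cases i
        · show u 0 = u 0 / w 0 * w 0
          field_simp
        · show u 1 = u 0 / w 0 * w 1
          rw [div_mul_eq_mul_div, eq_div_iff h0]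
          linear_combination hdet
      rw [this]
      exact Submodule.smul_mem _ _ (Submodule.mem_span_singleton_self w)
    · have : u = (u 1 / w 1) • w := by
        funext i
        fin_cases i
        · show u 0 = u 1 / w 1 * w 0
          rw [div_mul_eq_mul_div, eq_div_iff h1]
          linear_combination -hdet
        · show u 1 = u 1 / w 1 * w 1
          field_simp
      rw [this]
      exact Submodule.smul_mem _ _ (Submodule.mem_span_singleton_self w)
  · rw [Submodule.span_singleton_le_iff_mem]
    exact h

lemma fac_comm (P : Matrix (Fin 2) (Fin 2) ℂ) (a b : ℂ) :
    (P - a • 1) * (P - b • 1) = (P - b • 1) * (P - a • 1) := by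
  simp only [sub_mul, mul_sub, smul_mul_assoc, mul_smul_comm, smul_smul, one_mul, mul_one,
    smul_sub]
  rw [mul_comm a b]
  abel

lemma eigen_pow (P : Matrix (Fin 2) (Fin 2) ℂ) (ζ : ℂ) (u : Fin 2 → ℂ)
    (h : P.mulVec u = ζ • u) (m : ℕ) : (P ^ m).mulVec u = ζ ^ m • u := by
  induction m with
  | zero => simp
  | succ m ih =>
      rw [pow_succ', pow_succ', ← Matrix.mulVec_mulVec, ih, Matrix.mulVec_smul, h, smul_smul,
        mul_comm]

lemma smul_one_mulVec (a : ℂ) (u : Fin 2 → ℂ) :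
    (a • (1 : Matrix (Fin 2) (Fin 2) ℂ)).mulVec u = a • u := by
  rw [Matrix.smul_mulVec, Matrix.one_mulVec]

lemma eigvec_of_fac (P : Matrix (Fin 2) (Fin 2) ℂ) (a b : ℂ)
    (hfac : (P - a • 1) * (P - b • 1) = 0) (w : Fin 2 → ℂ) :
    P.mulVec ((P - b • 1).mulVec w) = a • ((P - b • 1).mulVec w) := by
  have h0 : ((P - a • 1) * (P - b • 1)).mulVec w = 0 := by rw [hfac]; simp
  rw [← Matrix.mulVec_mulVec, Matrix.sub_mulVec, smul_one_mulVec, sub_eq_zero] at h0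
  exact h0

lemma key_identity (P : Matrix (Fin 2) (Fin 2) ℂ) (a b : ℂ) (w : Fin 2 → ℂ) :
    (P - b • 1).mulVec w - (P - a • 1).mulVec w = (a - b) • w := by
  rw [Matrix.sub_mulVec, Matrix.sub_mulVec, smul_one_mulVec, smul_one_mulVec, sub_smul]
  abel

lemma hyp_lemma (P : Matrix (Fin 2) (Fin 2) ℂ) (ζ₁ ζ₂ : ℂ)
    (hfac : (P - ζ₁ • 1) * (P - ζ₂ • 1) = 0)
    (h2 : 1 ≤ ‖ζ₂‖) (h12 : ‖ζ₁‖ < ‖ζ₂‖)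
    (w : Fin 2 → ℂ)
    (hdecay : Tendsto (fun m : ℕ => (P ^ m).mulVec w) atTop (nhds 0)) :
    (P - ζ₁ • 1).mulVec w = 0 := by
  have hζ₂ : ζ₂ ≠ 0 := by
    intro h; rw [h] at h2; simp at h2; linarith
  set u₁ := (P - ζ₂ • 1).mulVec w with hu₁
  set u₂ := (P - ζ₁ • 1).mulVec w with hu₂
  have e1 : P.mulVec u₁ = ζ₁ • u₁ := eigvec_of_fac P ζ₁ ζ₂ hfac w
  have e2 : P.mulVec u₂ = ζ₂ • u₂ := eigvec_of_fac P ζ₂ ζ₁ (by rw [← fac_comm, hfac]) w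
  have hw : u₁ - u₂ = (ζ₁ - ζ₂) • w := key_identity P ζ₁ ζ₂ w
  have hkey : ∀ m : ℕ, ζ₁ ^ m • u₁ - ζ₂ ^ m • u₂ = (ζ₁ - ζ₂) • (P ^ m).mulVec w := by
    intro m
    have := congrArg (fun v => (P ^ m).mulVec v) hw
    simp only [Matrix.mulVec_sub, Matrix.mulVec_smul] at this
    rw [eigen_pow P ζ₁ u₁ e1 m, eigen_pow P ζ₂ u₂ e2 m] at this
    exact this
  -- multiply by ζ₂⁻ᵐ
  have hseq : ∀ m : ℕ, (ζ₁ / ζ₂) ^ m • u₁ - u₂ = (ζ₂⁻¹) ^ m • ((ζ₁ - ζ₂) • (P ^ m).mulVec w) := by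
    intro m
    rw [← hkey m, smul_sub, smul_smul, smul_smul, div_pow, div_eq_mul_inv, ← inv_pow,
      inv_pow, inv_mul_cancel₀ (pow_ne_zero m hζ₂), one_smul, mul_comm]
  have htend0 : Tendsto (fun m : ℕ => (ζ₂⁻¹) ^ m • ((ζ₁ - ζ₂) • (P ^ m).mulVec w)) atTop (nhds 0) := by
    apply squeeze_zero_norm (a := fun m => ‖ζ₁ - ζ₂‖ * ‖(P ^ m).mulVec w‖)
    · intro m
      rw [norm_smul, norm_smul]
      have h1 : ‖(ζ₂⁻¹) ^ m‖ ≤ 1 := by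
        rw [norm_pow]
        apply pow_le_one₀ (norm_nonneg _)
        rw [norm_inv]
        exact inv_le_one_of_one_le₀ h2
      calc ‖(ζ₂⁻¹) ^ m‖ * (‖ζ₁ - ζ₂‖ * ‖(P ^ m).mulVec w‖)
          ≤ 1 * (‖ζ₁ - ζ₂‖ * ‖(P ^ m).mulVec w‖) := by
            apply mul_le_mul_of_nonneg_right h1 (by positivity)
        _ = ‖ζ₁ - ζ₂‖ * ‖(P ^ m).mulVec w‖ := by
            rw [one_mul]
    · simpa using (hdecay.norm.const_mul (‖ζ₁ - ζ₂‖))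
  have htendL : Tendsto (fun m : ℕ => (ζ₁ / ζ₂) ^ m • u₁) atTop (nhds 0) := by
    have : Tendsto (fun m : ℕ => (ζ₁ / ζ₂) ^ m) atTop (nhds 0) := by
      apply tendsto_pow_atTop_nhds_zero_of_norm_lt_one
      rw [norm_div]
      rw [div_lt_one (lt_of_lt_of_le one_pos h2 |>.trans_le (le_refl _))]
      exact h12
    simpa using this.smul_const u₁
  have : Tendsto (fun _ : ℕ => u₂) atTop (nhds 0) := by
    have := htendL.sub (Tendsto.congr (fun m => (hseq m).symm) htend0)
    simpa using this
  simpa using (tendsto_nhds_unique this tendsto_const_nhds).symm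

lemma const_norm_zero {E : Type*} [NormedAddCommGroup E] (u : E)
    (h : Tendsto (fun _ : ℕ => u) atTop (nhds (0 : E))) : u = 0 :=
  tendsto_nhds_unique tendsto_const_nhds h

lemma contra_lemma (P : Matrix (Fin 2) (Fin 2) ℂ) (μ₁ μ₂ : ℂ)
    (h1 : ‖μ₁‖ = 1) (h2 : ‖μ₂‖ = 1)
    (hfac : (P - μ₁ • 1) * (P - μ₂ • 1) = 0)
    (w : Fin 2 → ℂ) (hw : w ≠ 0)
    (hdecay : Tendsto (fun m : ℕ => (P ^ m).mulVec w) atTop (nhds 0)) : False := by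
  have hμ₁0 : μ₁ ≠ 0 := by intro h; rw [h] at h1; simp at h1
  have hμ₂0 : μ₂ ≠ 0 := by intro h; rw [h] at h2; simp at h2
  by_cases hμ : μ₁ = μ₂
  · -- Jordan case
    subst hμ
    set c := (P - μ₁ • 1).mulVec w with hc_def
    by_cases hc : c = 0
    · -- eigenvector: norm is constant
      have hPw : P.mulVec w = μ₁ • w := by
        have : P.mulVec w - μ₁ • w = 0 := by
          rw [← hc, hc_def, Matrix.sub_mulVec, smul_one_mulVec]
        linear_combination (norm := module) this
      have hnorm : ∀ m : ℕ, ‖(P ^ m).mulVec w‖ = ‖w‖ := by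
        intro m
        rw [eigen_pow P μ₁ w hPw m, norm_smul, norm_pow, h1, one_pow,
          one_mul]
      have : Tendsto (fun _ : ℕ => ‖w‖) atTop (nhds 0) := by
        have := hdecay.norm
        simp only [norm_zero] at this
        exact Tendsto.congr (fun m => hnorm m) this
      have : ‖w‖ = 0 := tendsto_nhds_unique tendsto_const_nhds this
      exact hw (norm_eq_zero.mp this)
    · -- genuine Jordan block
      have hPc : P.mulVec c = μ₁ • c := eigvec_of_fac P μ₁ μ₁ hfac w
      have hPw : P.mulVec w = μ₁ • w + c := by
        have : P.mulVec w - μ₁ • w = c := by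
          rw [hc_def, Matrix.sub_mulVec, smul_one_mulVec]
        linear_combination (norm := module) this
      have hiter : ∀ m : ℕ, (P ^ (m + 1)).mulVec w
          = μ₁ ^ (m + 1) • w + (((m : ℂ) + 1) * μ₁ ^ m) • c := by
        intro m
        induction m with
        | zero => simpa using hPw
        | succ m ih =>
            rw [pow_succ', ← Matrix.mulVec_mulVec, ih]
            rw [Matrix.mulVec_add, Matrix.mulVec_smul, Matrix.mulVec_smul, hPw, hPc]
            push_cast
            match_scalars <;> ring
      obtain ⟨j, hj⟩ : ∃ j, c j ≠ 0 := by
        by_contra hcon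
        push_neg at hcon
        exact hc (funext fun j => hcon j)
      have hcomp : Tendsto (fun m : ℕ => ((P ^ (m + 1)).mulVec w) j) atTop (nhds 0) := by
        have h' : Tendsto (fun m : ℕ => ((P ^ m).mulVec w) j) atTop (nhds 0) := by
          have := tendsto_pi_nhds.mp hdecay j
          simpa using this
        exact h'.comp (tendsto_add_atTop_nat 1)
      have hlow : ∀ m : ℕ, ((m : ℝ) + 1) * ‖c j‖ - ‖w j‖
          ≤ ‖((P ^ (m + 1)).mulVec w) j‖ := by
        intro m
        rw [congrFun (hiter m) j]
        have e1 : ‖(μ₁ ^ (m+1) • w + (((m : ℂ) + 1) * μ₁ ^ m) • c) j‖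
            = ‖μ₁ ^ (m+1) * w j + ((m : ℂ) + 1) * μ₁ ^ m * c j‖ := by
          simp [Pi.add_apply, Pi.smul_apply, smul_eq_mul]
        rw [e1]
        have h3 : ‖((m : ℂ) + 1) * μ₁ ^ m * c j‖ = ((m : ℝ) + 1) * ‖c j‖ := by
          rw [norm_mul, norm_mul, norm_pow, h1, one_pow, mul_one]
          congr 1
          have : ((m : ℂ) + 1) = ((m + 1 : ℕ) : ℂ) := by push_cast; ring
          rw [this, Complex.norm_natCast]
          push_cast; ring
        have h4 : ‖μ₁ ^ (m+1) * w j‖ = ‖w j‖ := by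
          rw [norm_mul, norm_pow, h1, one_pow, one_mul]
        calc ((m : ℝ) + 1) * ‖c j‖ - ‖w j‖
            = ‖((m : ℂ) + 1) * μ₁ ^ m * c j‖ - ‖μ₁ ^ (m+1) * w j‖ := by rw [h3, h4]
          _ ≤ ‖((m : ℂ) + 1) * μ₁ ^ m * c j - (- (μ₁ ^ (m+1) * w j))‖ := by
              simpa using norm_sub_norm_le (((m : ℂ) + 1) * μ₁ ^ m * c j) (- (μ₁ ^ (m+1) * w j))
          _ = ‖μ₁ ^ (m+1) * w j + ((m : ℂ) + 1) * μ₁ ^ m * c j‖ := by ring_nf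
      have hbig : Tendsto (fun m : ℕ => ((m : ℝ) + 1) * ‖c j‖ - ‖w j‖)
          atTop atTop := by
        have h0 : Tendsto (fun m : ℕ => ((m : ℝ) + 1)) atTop atTop :=
          tendsto_atTop_add_const_right atTop 1 tendsto_natCast_atTop_atTop
        have h1' : Tendsto (fun m : ℕ => ((m : ℝ) + 1) * ‖c j‖) atTop atTop :=
          h0.atTop_mul_const (norm_pos_iff.mpr hj)
        have := tendsto_atTop_add_const_right atTop (-(‖w j‖)) h1'
        simpa [sub_eq_add_neg] using this
      have hsmall : Tendsto (fun m : ℕ => ‖((P ^ (m + 1)).mulVec w) j‖) atTop (nhds 0) := by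
        simpa using hcomp.norm
      have h5 : ∀ᶠ m : ℕ in atTop, ‖((P ^ (m + 1)).mulVec w) j‖ < 1 :=
        hsmall.eventually_lt_const one_pos
      have h6 : ∀ᶠ m : ℕ in atTop,
          (1 : ℝ) ≤ ((m : ℝ) + 1) * ‖c j‖ - ‖w j‖ :=
        hbig.eventually_ge_atTop 1
      obtain ⟨m, hm5, hm6⟩ := (h5.and h6).exists
      linarith [hlow m]
  · -- distinct unimodular eigenvalues
    set u₁ := (P - μ₂ • 1).mulVec w with hu₁
    set u₂ := (P - μ₁ • 1).mulVec w with hu₂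
    have e1 : P.mulVec u₁ = μ₁ • u₁ := eigvec_of_fac P μ₁ μ₂ hfac w
    have e2 : P.mulVec u₂ = μ₂ • u₂ := eigvec_of_fac P μ₂ μ₁ (by rw [← fac_comm, hfac]) w
    have hwid : u₁ - u₂ = (μ₁ - μ₂) • w := key_identity P μ₁ μ₂ w
    have hkey : ∀ m : ℕ, μ₁ ^ m • u₁ - μ₂ ^ m • u₂ = (μ₁ - μ₂) • (P ^ m).mulVec w := by
      intro m
      have := congrArg (fun v => (P ^ m).mulVec v) hwid
      simp only [Matrix.mulVec_sub, Matrix.mulVec_smul] at this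
      rw [eigen_pow P μ₁ u₁ e1 m, eigen_pow P μ₂ u₂ e2 m] at this
      exact this
    have htz : Tendsto (fun m : ℕ => μ₁ ^ m • u₁ - μ₂ ^ m • u₂) atTop (nhds 0) := by
      apply Tendsto.congr (fun m => (hkey m).symm)
      simpa using (hdecay.const_smul (μ₁ - μ₂))
    by_cases hu2 : u₂ = 0
    · -- then μ₁^m • u₁ → 0, but its norm is constant
      have h' : Tendsto (fun m : ℕ => μ₁ ^ m • u₁) atTop (nhds 0) := by
        apply Tendsto.congr (fun m => ?_) htz
        rw [hu2, smul_zero, sub_zero]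
      have : Tendsto (fun _ : ℕ => ‖u₁‖) atTop (nhds 0) := by
        have := h'.norm
        simp only [norm_zero] at this
        apply Tendsto.congr (fun m => ?_) this
        rw [norm_smul, norm_pow, h1, one_pow, one_mul]
      have hu1 : u₁ = 0 := norm_eq_zero.mp (tendsto_nhds_unique tendsto_const_nhds this)
      have : (μ₁ - μ₂) • w = 0 := by rw [← hwid, hu1, hu2, sub_zero]
      exact hw (by
        have := smul_eq_zero.mp this
        rcases this with h | h
        · exact absurd (sub_eq_zero.mp h) hμ
        · exact h)
    · obtain ⟨j, hj⟩ : ∃ j, u₂ j ≠ 0 := by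
        by_contra hcon
        push_neg at hcon
        exact hu2 (funext fun j => hcon j)
      -- scalar sequence
      have hscal : Tendsto (fun m : ℕ => μ₁ ^ m * u₁ j - μ₂ ^ m * u₂ j) atTop (nhds 0) := by
        have := tendsto_pi_nhds.mp htz j
        simpa [Pi.sub_apply, Pi.smul_apply, smul_eq_mul] using this
      set z := μ₁ / μ₂ with hz
      have hz1 : z ≠ 1 := by
        intro h
        exact hμ ((div_eq_one_iff_eq hμ₂0).mp (hz ▸ h))
      have habsz : ‖z‖ = 1 := by rw [hz, norm_div, h1, h2, div_one]
      have hztend : Tendsto (fun m : ℕ => z ^ m * u₁ j - u₂ j) atTop (nhds 0) := by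
        apply squeeze_zero_norm (a := fun m => ‖μ₁ ^ m * u₁ j - μ₂ ^ m * u₂ j‖)
        · intro m
          have : z ^ m * u₁ j - u₂ j = (μ₂ ^ m)⁻¹ * (μ₁ ^ m * u₁ j - μ₂ ^ m * u₂ j) := by
            field_simp [hz]
            have hzm : μ₂ ^ m * (μ₂⁻¹) ^ m = 1 := by
              rw [← mul_pow, mul_inv_cancel₀ hμ₂0, one_pow]
            linear_combination (μ₁ ^ m * u₁ j) * hzm
          rw [this, norm_mul, norm_inv, norm_pow, h2, one_pow, inv_one,
            one_mul]
        · simpa using hscal.norm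
      have hzlim : Tendsto (fun m : ℕ => z ^ m * u₁ j) atTop (nhds (u₂ j)) := by
        have := hztend.add_const (u₂ j)
        simpa using this
      have hu1j : u₁ j ≠ 0 := by
        intro h
        rw [h] at hzlim
        simp only [mul_zero] at hzlim
        exact hj (tendsto_nhds_unique hzlim tendsto_const_nhds)
      have hzpow : Tendsto (fun m : ℕ => z ^ m) atTop (nhds (u₂ j / u₁ j)) := by
        have := hzlim.div_const (u₁ j)
        apply Tendsto.congr (fun m => ?_) this
        field_simp
      have hs0 : u₂ j / u₁ j ≠ 0 := div_ne_zero hj hu1j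
      have hshift : Tendsto (fun m : ℕ => z ^ (m + 1)) atTop (nhds (u₂ j / u₁ j)) :=
        hzpow.comp (tendsto_add_atTop_nat 1)
      have hshift2 : Tendsto (fun m : ℕ => z ^ (m + 1)) atTop (nhds (z * (u₂ j / u₁ j))) := by
        have := hzpow.const_mul z
        apply Tendsto.congr (fun m => ?_) this
        rw [pow_succ']
      have : z * (u₂ j / u₁ j) = u₂ j / u₁ j := tendsto_nhds_unique hshift2 hshift
      have hz' : (z - 1) * (u₂ j / u₁ j) = 0 := by linear_combination this
      rcases mul_eq_zero.mp hz' with h | h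
      · exact hz1 (sub_eq_zero.mp h)
      · exact hs0 h


lemma prodRev_congr (f g : ℕ → Matrix (Fin 2) (Fin 2) ℂ) (n : ℕ)
    (h : ∀ k < n, f k = g k) : prodRev f n = prodRev g n := by
  induction n with
  | zero => rfl
  | succ n ih =>
      rw [prodRev, prodRev, h n (Nat.lt_succ_self n),
        ih (fun k hk => h k (Nat.lt_succ_of_lt hk))]

lemma prodRev_smul (a : ℕ → ℂ) (T : ℕ → Matrix (Fin 2) (Fin 2) ℂ) (n : ℕ) :
    prodRev (fun k => a k • T k) n = (∏ i ∈ Finset.range n, a i) • prodRev T n := by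
  induction n with
  | zero => simp [prodRev]
  | succ n ih =>
      rw [prodRev, prodRev, ih, Finset.prod_range_succ, smul_mul_assoc, mul_smul_comm,
        smul_smul, mul_comm]

lemma det_prodRev (T : ℕ → Matrix (Fin 2) (Fin 2) ℂ) (n : ℕ) :
    (prodRev T n).det = ∏ i ∈ Finset.range n, (T i).det := by
  induction n with
  | zero => simp [prodRev]
  | succ n ih => rw [prodRev, Matrix.det_mul, ih, Finset.prod_range_succ, mul_comm]

lemma normsq_c (a : ℂ) : a * starRingEnd ℂ a = (‖a‖ : ℂ) ^ 2 := by
  rw [Complex.mul_conj]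
  norm_cast
  rw [Complex.sq_norm]

/-- determinant of the transfer matrix -/
lemma det_transferM (a b : ℂ) (d l : ℝ) (ha : a ≠ 0) (hab : ‖a‖ ^ 2 + ‖b‖ ^ 2 = 1) :
    (transferM a b d l).det = starRingEnd ℂ a / a := by
  rw [transferM, Matrix.det_smul, Matrix.det_fin_two_of]
  have h1 : Complex.exp (Complex.I * (↑l - ↑d)) * Complex.exp (-(Complex.I * (↑l - ↑d))) = 1 := by
    rw [← Complex.exp_add]; simp
  have h2 : (b : ℂ) * starRingEnd ℂ b = (‖b‖ : ℂ) ^ 2 := normsq_c b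
  have h3 : (a : ℂ) * starRingEnd ℂ a = (‖a‖ : ℂ) ^ 2 := normsq_c a
  have hab' : (‖a‖ : ℂ) ^ 2 + (‖b‖ : ℂ) ^ 2 = 1 := by exact_mod_cast hab
  rw [Fintype.card_fin]
  field_simp
  linear_combination h1 - h2 - hab' - h3

/-- matrices of the form `[[a, b], [conj b, conj a]]` -/
def SelfD (M : Matrix (Fin 2) (Fin 2) ℂ) : Prop :=
  M 1 1 = starRingEnd ℂ (M 0 0) ∧ M 1 0 = starRingEnd ℂ (M 0 1)

lemma selfD_one : SelfD 1 := by
  constructor <;> simp [Matrix.one_apply]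

lemma selfD_mul (M N : Matrix (Fin 2) (Fin 2) ℂ) (hM : SelfD M) (hN : SelfD N) :
    SelfD (M * N) := by
  obtain ⟨hM1, hM2⟩ := hM
  obtain ⟨hN1, hN2⟩ := hN
  constructor <;>
    simp only [Matrix.mul_apply, Fin.sum_univ_two, hM1, hM2, hN1, hN2, map_add, _root_.map_mul,
      Complex.conj_conj] <;> ring

lemma selfD_smul_transferM (a b : ℂ) (d l : ℝ) (ha : a ≠ 0) :
    SelfD (a • transferM a b d l) := by
  rw [transferM, smul_smul, mul_inv_cancel₀ ha, one_smul]
  constructor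
  · show Complex.exp (-(Complex.I * (↑l - ↑d))) = starRingEnd ℂ (Complex.exp (Complex.I * (↑l - ↑d)))
    rw [← Complex.exp_conj]
    congr 1
    simp [Complex.conj_ofReal]
    try ring
  · show -(starRingEnd ℂ b) = starRingEnd ℂ (-b)
    simp

lemma selfD_prodRev (a : ℕ → ℂ) (T : ℕ → Matrix (Fin 2) (Fin 2) ℂ) (n : ℕ)
    (h : ∀ k < n, SelfD (a k • T k)) :
    SelfD (prodRev (fun k => a k • T k) n) := by
  induction n with
  | zero => exact selfD_one
  | succ n ih =>
      rw [prodRev]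
      exact selfD_mul _ _ (h n (Nat.lt_succ_self n))
        (ih (fun k hk => h k (Nat.lt_succ_of_lt hk)))

lemma selfD_trace_real (M : Matrix (Fin 2) (Fin 2) ℂ) (h : SelfD M) : M.trace.im = 0 := by
  rw [Matrix.trace_fin_two, h.1]
  simp [Complex.add_im]

lemma Adef_eq (αs : ℕ → ℂ) (Ts : ℕ → Matrix (Fin 2) (Fin 2) ℂ) (n : ℕ)
    (hsd : ∀ k < n, SelfD (αs k • Ts k)) :
    (Adef αs Ts n : ℂ) = (1 / 2 : ℂ) * (∏ i ∈ Finset.range n, αs i) * (prodRev Ts n).trace := by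
  set z := (1 / 2 : ℂ) * (∏ i ∈ Finset.range n, αs i) * (prodRev Ts n).trace with hz
  have him : z.im = 0 := by
    have h1 : (prodRev (fun k => αs k • Ts k) n).trace
        = (∏ i ∈ Finset.range n, αs i) * (prodRev Ts n).trace := by
      rw [prodRev_smul, Matrix.trace_smul, smul_eq_mul]
    have h2 := selfD_trace_real _ (selfD_prodRev αs Ts n hsd)
    rw [h1] at h2
    rw [hz]
    have : z = (1/2 : ℂ) * ((∏ i ∈ Finset.range n, αs i) * (prodRev Ts n).trace) := by
      rw [hz]; ring
    rw [← hz, this, Complex.mul_im]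
    simp [h2]
    try norm_num
  rw [Adef, ← hz]
  exact Complex.ext (by simp) (by simp [him])

lemma rec_step (a b : ℂ) (d l : ℝ) (ha : a ≠ 0) (hab : ‖a‖ ^ 2 + ‖b‖ ^ 2 = 1)
    (P0 Q0 Q1 R1 : ℂ)
    (hE0 : Complex.exp (Complex.I * d) * (a * Q0 + b * Q1) = Complex.exp (Complex.I * l) * P0)
    (hE1 : Complex.exp (Complex.I * d) * (-(starRingEnd ℂ b) * Q0 + starRingEnd ℂ a * Q1)
      = Complex.exp (Complex.I * l) * R1) :
    (transferM a b d l).mulVec ![P0, Q1] = ![Q0, R1] := by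
  set X := Complex.exp (Complex.I * d) with hX_def
  set Y := Complex.exp (Complex.I * l) with hY_def
  set Z := Complex.exp (Complex.I * ((l : ℂ) - (d : ℂ))) with hZ_def
  set W := Complex.exp (-(Complex.I * ((l : ℂ) - (d : ℂ)))) with hW_def
  have hX : X ≠ 0 := Complex.exp_ne_zero _
  have hZ : Z ≠ 0 := Complex.exp_ne_zero _
  have hYZX : Y = Z * X := by
    rw [hY_def, hZ_def, hX_def, ← Complex.exp_add]
    congr 1
    ring
  have hWZ : W * Z = 1 := by
    rw [hW_def, hZ_def, ← Complex.exp_add]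
    simp
  have hn : a * starRingEnd ℂ a + b * starRingEnd ℂ b = 1 := by
    rw [normsq_c, normsq_c]
    exact_mod_cast hab
  have h5 : Z * P0 = a * Q0 + b * Q1 := by
    refine mul_left_cancel₀ hX ?_
    linear_combination -hE0 - P0 * hYZX
  funext i
  fin_cases i
  · show (transferM a b d l).mulVec ![P0, Q1] 0 = Q0
    simp only [transferM, Matrix.smul_mulVec, Pi.smul_apply, smul_eq_mul]
    rw [inv_mul_eq_div, div_eq_iff ha]
    show (!![Z, -b; -(starRingEnd ℂ b), W]).mulVec ![P0, Q1] 0 = Q0 * a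
    simp only [Matrix.mulVec, dotProduct, Fin.sum_univ_two, Matrix.cons_val',
      Matrix.cons_val_zero, Matrix.cons_val_one, Matrix.head_cons, Matrix.empty_val',
      Matrix.cons_val_fin_one, Matrix.of_apply]
    linear_combination h5
  · show (transferM a b d l).mulVec ![P0, Q1] 1 = R1
    simp only [transferM, Matrix.smul_mulVec, Pi.smul_apply, smul_eq_mul]
    rw [inv_mul_eq_div, div_eq_iff ha]
    show (!![Z, -b; -(starRingEnd ℂ b), W]).mulVec ![P0, Q1] 1 = R1 * a
    simp only [Matrix.mulVec, dotProduct, Fin.sum_univ_two, Matrix.cons_val',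
      Matrix.cons_val_zero, Matrix.cons_val_one, Matrix.head_cons, Matrix.empty_val',
      Matrix.cons_val_fin_one, Matrix.of_apply, Matrix.vecHead, Matrix.vecTail]
    refine mul_left_cancel₀ hZ ?_
    refine mul_left_cancel₀ hX ?_
    linear_combination (-X * starRingEnd ℂ b) * h5 + (X * Q1) * hWZ - (X * Q1) * hn
      + a * hE1 + (a * R1) * hYZX

lemma rec_prod (T : ℤ → Matrix (Fin 2) (Fin 2) ℂ) (v : ℤ → Fin 2 → ℂ)
    (hrec : ∀ x : ℤ, v (x + 1) = (T x).mulVec (v x)) (c : ℤ) (n : ℕ) :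
    v (c + n) = (prodRev (fun j => T (c + j)) n).mulVec (v c) := by
  induction n with
  | zero => simp [prodRev]
  | succ n ih =>
      have h1 : c + ((n : ℤ) + 1) = (c + n) + 1 := by ring
      push_cast
      rw [h1, hrec (c + n), ih]
      push_cast
      rw [prodRev, ← Matrix.mulVec_mulVec]

lemma prodZpos_eq (T : ℤ → Matrix (Fin 2) (Fin 2) ℂ) (n : ℕ) :
    prodZpos T n = prodRev (fun j : ℕ => T ((0 : ℤ) + j)) n := by
  induction n with
  | zero => rfl
  | succ n ih => rw [prodZpos, prodRev, ih]; norm_num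

lemma v_pos (T : ℤ → Matrix (Fin 2) (Fin 2) ℂ) (v : ℤ → Fin 2 → ℂ)
    (hrec : ∀ x : ℤ, v (x + 1) = (T x).mulVec (v x)) (n : ℕ) :
    v n = (prodZpos T n).mulVec (v 0) := by
  have := rec_prod T v hrec 0 n
  rw [zero_add] at this
  rw [this, prodZpos_eq]

lemma v_neg (T : ℤ → Matrix (Fin 2) (Fin 2) ℂ) (v : ℤ → Fin 2 → ℂ)
    (hrec : ∀ x : ℤ, v (x + 1) = (T x).mulVec (v x))
    (hinv : ∀ x : ℤ, (T x)⁻¹ * T x = 1) (n : ℕ) :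
    v (-(n : ℤ)) = (prodZneg T n).mulVec (v 0) := by
  induction n with
  | zero => simp [prodZneg]
  | succ n ih =>
      have h1 : v (-(n : ℤ)) = (T (-((n : ℕ) + 1 : ℕ))).mulVec (v (-((n : ℕ) + 1 : ℕ))) := by
        have := hrec (-((n : ℕ) + 1 : ℕ))
        have h2 : (-((n : ℕ) + 1 : ℕ) : ℤ) + 1 = -(n : ℤ) := by push_cast; ring
        rw [h2] at this
        exact this
      have h3 : v (-((n : ℕ) + 1 : ℕ) : ℤ)
          = ((T (-((n : ℕ) + 1 : ℕ)))⁻¹).mulVec (v (-(n : ℤ))) := by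
        rw [h1, Matrix.mulVec_mulVec, hinv, Matrix.one_mulVec]
      rw [prodZneg, ← Matrix.mulVec_mulVec, ← ih]
      exact_mod_cast h3

lemma transferM_inv (a b : ℂ) (d l : ℝ) (ha : a ≠ 0) (hab : ‖a‖ ^ 2 + ‖b‖ ^ 2 = 1) :
    (transferM a b d l)⁻¹ * transferM a b d l = 1 := by
  apply Matrix.nonsing_inv_mul
  rw [det_transferM a b d l ha hab]
  exact isUnit_iff_ne_zero.mpr (div_ne_zero (by simpa using ha) ha)

lemma summable_comp_tendsto (f : ℤ → ℝ) (hf : Summable f) (g : ℕ → ℤ)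
    (hg : Function.Injective g) : Filter.Tendsto (fun m => f (g m)) atTop (nhds 0) := by
  have h1 : Filter.Tendsto f cofinite (nhds 0) := hf.tendsto_cofinite_zero
  have h2 : Filter.Tendsto g atTop cofinite := by
    rw [← Nat.cofinite_eq_atTop]
    exact hg.tendsto_cofinite
  exact h1.comp h2

lemma psi_comp_tendsto (Ψ : ℤ → Fin 2 → ℂ) (hsum : SqSummable Ψ) (g : ℕ → ℤ)
    (hg : Function.Injective g) (i : Fin 2) :
    Filter.Tendsto (fun m => Ψ (g m) i) atTop (nhds 0) := by
  have h0 := summable_comp_tendsto _ hsum g hg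
  rw [tendsto_zero_iff_norm_tendsto_zero]
  have hb : ∀ m, ‖Ψ (g m) i‖ ^ 2 ≤ ‖Ψ (g m) 0‖ ^ 2 + ‖Ψ (g m) 1‖ ^ 2 := by
    intro m
    fin_cases i
    · exact le_add_of_nonneg_right (by positivity)
    · exact le_add_of_nonneg_left (by positivity)
  have hsq : Filter.Tendsto (fun m => ‖Ψ (g m) i‖ ^ 2) atTop (nhds 0) := by
    apply squeeze_zero (fun m => by positivity) hb h0
  have := hsq.sqrt
  rw [Real.sqrt_zero] at this
  apply Filter.Tendsto.congr (fun m => ?_) this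
  rw [Real.sqrt_sq (norm_nonneg _)]

lemma elliptic (Pa : ℂ) (hPa : Pa ≠ 0) (A : ℝ) (hA : A ^ 2 ≤ ‖Pa‖ ^ 2) :
    ∃ μ₁ μ₂ : ℂ, ‖μ₁‖ = 1 ∧ ‖μ₂‖ = 1 ∧
      μ₁ + μ₂ = 2 * (A : ℂ) / Pa ∧ μ₁ * μ₂ = starRingEnd ℂ Pa / Pa := by
  set s := Real.sqrt (‖Pa‖ ^ 2 - A ^ 2) with hs_def
  have hs2 : s ^ 2 = ‖Pa‖ ^ 2 - A ^ 2 := Real.sq_sqrt (by linarith)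
  have habs : ‖(A : ℂ) + (s : ℂ) * Complex.I‖ = ‖Pa‖ := by
    rw [Complex.norm_add_mul_I]
    rw [show A ^ 2 + s ^ 2 = ‖Pa‖ ^ 2 by linarith]
    exact Real.sqrt_sq (norm_nonneg Pa)
  have habs' : ‖(A : ℂ) - (s : ℂ) * Complex.I‖ = ‖Pa‖ := by
    have : (A : ℂ) - (s : ℂ) * Complex.I = (A : ℂ) + (-s : ℝ) * Complex.I := by
      push_cast; ring
    rw [this, Complex.norm_add_mul_I]
    rw [show A ^ 2 + (-s) ^ 2 = ‖Pa‖ ^ 2 by nlinarith]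
    exact Real.sqrt_sq (norm_nonneg Pa)
  have hPa0 : ‖Pa‖ ≠ 0 := by simpa using hPa
  have hnc : Pa * starRingEnd ℂ Pa = (‖Pa‖ : ℂ) ^ 2 := by
    rw [Complex.mul_conj, Complex.normSq_eq_norm_sq]
    push_cast; ring
  refine ⟨((A : ℂ) + (s : ℂ) * Complex.I) / Pa, ((A : ℂ) - (s : ℂ) * Complex.I) / Pa,
    ?_, ?_, ?_, ?_⟩
  · rw [norm_div, habs, div_self hPa0]
  · rw [norm_div, habs', div_self hPa0]
  · rw [← add_div]
    congr 1
    ring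
  · rw [div_mul_div_comm]
    rw [div_eq_div_iff (by exact mul_ne_zero hPa hPa) hPa]
    have hs2' : ((s : ℂ)) ^ 2 = (‖Pa‖ : ℂ) ^ 2 - (A : ℂ) ^ 2 := by
      exact_mod_cast congrArg (fun r : ℝ => (r : ℂ)) hs2
    have hI : (Complex.I) ^ 2 = -1 := Complex.I_sq
    linear_combination (-((s : ℂ) ^ 2 * Pa)) * hI + Pa * hs2' - Pa * hnc

lemma sign_sq (A : ℝ) (hA : A ≠ 0) : Real.sign A ^ 2 = 1 := by
  rcases lt_or_gt_of_ne hA with h | h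
  · rw [Real.sign_of_neg h]; norm_num
  · rw [Real.sign_of_pos h]; norm_num

lemma sgn_mul_self (A : ℝ) : Real.sign A * A = |A| := by
  rcases lt_trichotomy A 0 with h | h | h
  · rw [Real.sign_of_neg h, abs_of_neg h]; ring
  · simp [h]
  · rw [Real.sign_of_pos h, abs_of_pos h]; ring

lemma hyperbolic (Pa : ℂ) (hPa : Pa ≠ 0) (A : ℝ) (hA : ‖Pa‖ ^ 2 < A ^ 2) :
    (((A : ℂ) - ((Real.sign A * Real.sqrt (A ^ 2 - ‖Pa‖ ^ 2) : ℝ) : ℂ)) / Pa)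
      + (((A : ℂ) + ((Real.sign A * Real.sqrt (A ^ 2 - ‖Pa‖ ^ 2) : ℝ) : ℂ)) / Pa)
      = 2 * (A : ℂ) / Pa ∧
    (((A : ℂ) - ((Real.sign A * Real.sqrt (A ^ 2 - ‖Pa‖ ^ 2) : ℝ) : ℂ)) / Pa)
      * (((A : ℂ) + ((Real.sign A * Real.sqrt (A ^ 2 - ‖Pa‖ ^ 2) : ℝ) : ℂ)) / Pa)
      = starRingEnd ℂ Pa / Pa ∧
    ‖((A : ℂ) - ((Real.sign A * Real.sqrt (A ^ 2 - ‖Pa‖ ^ 2) : ℝ) : ℂ)) / Pa‖ < 1 ∧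
    1 < ‖((A : ℂ) + ((Real.sign A * Real.sqrt (A ^ 2 - ‖Pa‖ ^ 2) : ℝ) : ℂ)) / Pa‖ := by
  set q := ‖Pa‖ with hq_def
  have hq0 : 0 < q := by
    rw [hq_def]
    exact norm_pos_iff.mpr hPa
  have hA0 : A ≠ 0 := by
    intro h
    rw [h] at hA
    nlinarith
  set s := Real.sqrt (A ^ 2 - q ^ 2) with hs_def
  have hs2 : s ^ 2 = A ^ 2 - q ^ 2 := Real.sq_sqrt (by nlinarith)
  have hs0 : 0 < s := Real.sqrt_pos.mpr (by nlinarith)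
  set B := |A| with hB_def
  have hB2 : B ^ 2 = A ^ 2 := sq_abs A
  have hB0 : 0 < B := abs_pos.mpr hA0
  have hBq : q < B := by nlinarith
  have hsB : s < B := by nlinarith
  have hsg2 : Real.sign A ^ 2 = 1 := sign_sq A hA0
  have hsgA : Real.sign A * A = B := sgn_mul_self A
  -- real absolute values
  have habs2 : |A + Real.sign A * s| = B + s := by
    rcases lt_or_gt_of_ne hA0 with h | h
    · rw [Real.sign_of_neg h]
      rw [abs_of_neg (by nlinarith), hB_def, abs_of_neg h]; ring
    · rw [Real.sign_of_pos h]
      rw [abs_of_pos (by nlinarith), hB_def, abs_of_pos h]; ring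
  have habs1 : |A - Real.sign A * s| = B - s := by
    rcases lt_or_gt_of_ne hA0 with h | h
    · rw [Real.sign_of_neg h]
      rw [abs_of_neg (by nlinarith), hB_def, abs_of_neg h]; ring
    · rw [Real.sign_of_pos h]
      rw [abs_of_pos (by nlinarith), hB_def, abs_of_pos h]; ring
  have hnc : Pa * starRingEnd ℂ Pa = (q : ℂ) ^ 2 := by
    rw [hq_def, Complex.mul_conj, Complex.normSq_eq_norm_sq]
    push_cast; ring
  refine ⟨?_, ?_, ?_, ?_⟩
  · rw [← add_div]
    congr 1
    push_cast
    ring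
  · rw [div_mul_div_comm, div_eq_div_iff (mul_ne_zero hPa hPa) hPa]
    have hs2' : ((Real.sign A * s : ℝ) : ℂ) ^ 2 = (A : ℂ) ^ 2 - (q : ℂ) ^ 2 := by
      have : (Real.sign A * s) ^ 2 = A ^ 2 - q ^ 2 := by
        rw [mul_pow, hsg2, one_mul, hs2]
      exact_mod_cast congrArg (fun r : ℝ => (r : ℂ)) this
    linear_combination (-Pa) * hs2' - Pa * hnc
  · have e1 : ((A : ℂ) - ((Real.sign A * s : ℝ) : ℂ)) = ((A - Real.sign A * s : ℝ) : ℂ) := by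
      push_cast; ring
    rw [e1, norm_div, Complex.norm_real, Real.norm_eq_abs, habs1, ← hq_def, div_lt_one hq0]
    nlinarith
  · have e1 : ((A : ℂ) + ((Real.sign A * s : ℝ) : ℂ)) = ((A + Real.sign A * s : ℝ) : ℂ) := by
      push_cast; ring
    rw [e1, norm_div, Complex.norm_real, Real.norm_eq_abs, habs2, ← hq_def, lt_div_iff₀ hq0, one_mul]
    nlinarith

lemma fac2' (M : Matrix (Fin 2) (Fin 2) ℂ) (a b : ℂ) (hs : a + b = M.trace)
    (hp : a * b = M.det) : (M - a • 1) * (M - b • 1) = 0 := by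
  ext i j
  rw [Matrix.trace_fin_two] at hs
  rw [Matrix.det_fin_two] at hp
  fin_cases i <;> fin_cases j <;>
    simp [Matrix.mul_apply, Fin.sum_univ_two, Matrix.one_apply] <;>
    first
      | linear_combination (-(M 0 0)) * hs + hp
      | linear_combination (-(M 0 1)) * hs
      | linear_combination (-(M 1 0)) * hs
      | linear_combination (-(M 1 1)) * hs + hp

lemma trace_inv (M : Matrix (Fin 2) (Fin 2) ℂ) (hd : M.det ≠ 0) :
    M⁻¹.trace = M.det⁻¹ * M.trace := by
  rw [Matrix.inv_def, Matrix.trace_smul, Ring.inverse_eq_inv']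
  congr 1
  rw [Matrix.trace_fin_two, Matrix.trace_fin_two]
  rw [Matrix.adjugate_fin_two]
  simp
  ring

lemma det_inv' (M : Matrix (Fin 2) (Fin 2) ℂ) (hd : M.det ≠ 0) :
    M⁻¹.det = M.det⁻¹ := by
  rw [Matrix.det_nonsing_inv, Ring.inverse_eq_inv']

lemma inv_fac (M : Matrix (Fin 2) (Fin 2) ℂ) (hd : M.det ≠ 0) (a b : ℂ)
    (ha : a ≠ 0) (hb : b ≠ 0) (hs : a + b = M.trace) (hp : a * b = M.det) :
    (M⁻¹ - b⁻¹ • 1) * (M⁻¹ - a⁻¹ • 1) = 0 := by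
  apply fac2'
  · rw [trace_inv M hd, ← hs, ← hp]
    field_simp
  · rw [det_inv' M hd, ← hp]
    rw [mul_inv]
    ring

lemma eig_of_inv_eig (M : Matrix (Fin 2) (Fin 2) ℂ) (hd : M.det ≠ 0) (z : ℂ) (hz : z ≠ 0)
    (w : Fin 2 → ℂ) (h : (M⁻¹ - z⁻¹ • 1).mulVec w = 0) : (M - z • 1).mulVec w = 0 := by
  have h1 : M⁻¹.mulVec w = z⁻¹ • w := by
    have := h
    rw [Matrix.sub_mulVec, Matrix.smul_mulVec, Matrix.one_mulVec, sub_eq_zero] at this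
    exact this
  have h2 : M.mulVec (M⁻¹.mulVec w) = w := by
    rw [Matrix.mulVec_mulVec, Matrix.mul_nonsing_inv M (isUnit_iff_ne_zero.mpr hd),
      Matrix.one_mulVec]
  rw [h1] at h2
  rw [Matrix.mulVec_smul] at h2
  rw [Matrix.sub_mulVec, Matrix.smul_mulVec, Matrix.one_mulVec, sub_eq_zero]
  have := congrArg (fun u => z • u) h2
  simp only [smul_smul, mul_inv_cancel₀ hz, one_smul] at this
  exact this

lemma inj_affine (c k : ℤ) (hk : k ≠ 0) : Function.Injective (fun m : ℕ => c + (m : ℤ) * k) := by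
  intro a b h
  simp only at h
  have h2 : (a : ℤ) * k = (b : ℤ) * k := by linarith
  have := mul_right_cancel₀ hk h2
  exact_mod_cast this

lemma v_tendsto (Ψ : ℤ → Fin 2 → ℂ) (hsum : SqSummable Ψ) (g : ℕ → ℤ)
    (hg : Function.Injective g) (hg' : Function.Injective (fun m => g m - 1)) :
    Tendsto (fun m : ℕ => (![Ψ (g m - 1) 0, Ψ (g m) 1] : Fin 2 → ℂ)) atTop (nhds 0) := by
  rw [tendsto_pi_nhds]
  intro i
  fin_cases i
  · have := psi_comp_tendsto Ψ hsum (fun m => g m - 1) hg' 0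
    simpa using this
  · have := psi_comp_tendsto Ψ hsum g hg 1
    simpa using this

lemma det_prodRevN_ne (T : ℕ → Matrix (Fin 2) (Fin 2) ℂ) (n : ℕ)
    (h : ∀ k < n, (T k).det ≠ 0) : (prodRev T n).det ≠ 0 := by
  rw [det_prodRev]
  rw [Finset.prod_ne_zero_iff]
  intro i hi
  exact h i (Finset.mem_range.mp hi)

lemma det_prodZneg_ne (T : ℤ → Matrix (Fin 2) (Fin 2) ℂ) (n : ℕ)
    (h : ∀ x : ℤ, (T x).det ≠ 0) : (prodZneg T n).det ≠ 0 := by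
  induction n with
  | zero => simp [prodZneg]
  | succ n ih =>
      rw [prodZneg, Matrix.det_mul]
      apply mul_ne_zero _ ih
      rw [Matrix.det_nonsing_inv]
      simpa [Ring.inverse_eq_inv'] using h _

lemma coinM_mulVec0 (a b : ℂ) (d : ℝ) (u : Fin 2 → ℂ) :
    (coinM a b d).mulVec u 0 = Complex.exp (Complex.I * d) * (a * u 0 + b * u 1) := by
  simp only [coinM, Matrix.smul_mulVec, Pi.smul_apply, smul_eq_mul]
  congr 1
  simp [Matrix.mulVec, dotProduct, Fin.sum_univ_two]

lemma coinM_mulVec1 (a b : ℂ) (d : ℝ) (u : Fin 2 → ℂ) :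
    (coinM a b d).mulVec u 1
      = Complex.exp (Complex.I * d) * (-(starRingEnd ℂ b) * u 0 + starRingEnd ℂ a * u 1) := by
  simp only [coinM, Matrix.smul_mulVec, Pi.smul_apply, smul_eq_mul]
  congr 1
  simp [Matrix.mulVec, dotProduct, Fin.sum_univ_two]

/-- If `e^{iλ} ∈ σ(U)`, then the two one-dimensional subspaces of `ℂ²` appearing in the main
theorem coincide:
`ker((∏_{i=0}^{n_+−1} T_i^+ − ζ_+^<·I)·T_+) = ker((∏_{i=0}^{n_−−1} T_i^− − ζ_−^>·I)·T_−)`. -/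
theorem ker_plus_eq_ker_minus_of_eigenvalue
    (α β : ℤ → ℂ) (Δ : ℤ → ℝ)
    (hα : ∀ x, α x ≠ 0)
    (hαβ : ∀ x, ‖α x‖ ^ 2 + ‖β x‖ ^ 2 = 1)
    (hΔ : ∀ x, 0 ≤ Δ x ∧ Δ x < 2 * π)
    (xp xm : ℤ) (hxp : 0 ≤ xp) (hxm : xm ≤ 0)
    (np nm : ℕ) (hnp : 0 < np) (hnm : 0 < nm)
    (αp βp : ℕ → ℂ) (Δp : ℕ → ℝ) (αm βm : ℕ → ℂ) (Δm : ℕ → ℝ)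
    (hαp : ∀ k < np, αp k ≠ 0)
    (hαβp : ∀ k < np, ‖αp k‖ ^ 2 + ‖βp k‖ ^ 2 = 1)
    (hΔp : ∀ k < np, 0 ≤ Δp k ∧ Δp k < 2 * π)
    (hαm : ∀ k < nm, αm k ≠ 0)
    (hαβm : ∀ k < nm, ‖αm k‖ ^ 2 + ‖βm k‖ ^ 2 = 1)
    (hΔm : ∀ k < nm, 0 ≤ Δm k ∧ Δm k < 2 * π)
    (hper_p : ∀ x : ℤ, xp ≤ x →
      α x = αp ((x - xp) % (np : ℤ)).toNat ∧ β x = βp ((x - xp) % (np : ℤ)).toNat ∧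
        Δ x = Δp ((x - xp) % (np : ℤ)).toNat)
    (hper_m : ∀ x : ℤ, x < xm →
      α x = αm ((x - xm) % (nm : ℤ)).toNat ∧ β x = βm ((x - xm) % (nm : ℤ)).toNat ∧
        Δ x = Δm ((x - xm) % (nm : ℤ)).toNat)
    (l : ℝ) (hl : 0 ≤ l ∧ l < 2 * π)
    (hσ : ∃ Ψ : ℤ → Fin 2 → ℂ, SqSummable Ψ ∧ Ψ ≠ 0 ∧
        Uact (fun x => coinM (α x) (β x) (Δ x)) Ψ = Complex.exp (Complex.I * l) • Ψ) :
    LinearMap.ker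
        ((prodRev (fun k => transferM (αp k) (βp k) (Δp k) l) np -
            zetaLT αp (fun k => transferM (αp k) (βp k) (Δp k) l) np • 1) *
          prodZpos (fun x => transferM (α x) (β x) (Δ x) l) xp.toNat).mulVecLin =
      LinearMap.ker
        ((prodRev (fun k => transferM (αm k) (βm k) (Δm k) l) nm -
            zetaGT αm (fun k => transferM (αm k) (βm k) (Δm k) l) nm • 1) *
          prodZneg (fun x => transferM (α x) (β x) (Δ x) l) xm.natAbs).mulVecLin := by
  classical
  obtain ⟨Ψ, hsum, hΨ0, hU⟩ := hσ
  set T : ℤ → Matrix (Fin 2) (Fin 2) ℂ := fun x => transferM (α x) (β x) (Δ x) l with hT_def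
  set v : ℤ → Fin 2 → ℂ := fun x => ![Ψ (x - 1) 0, Ψ x 1] with hv_def
  -- the transfer recursion
  have hrec : ∀ x : ℤ, v (x + 1) = (T x).mulVec (v x) := by
    intro x
    have e0 : Complex.exp (Complex.I * Δ x) * (α x * Ψ x 0 + β x * Ψ x 1)
        = Complex.exp (Complex.I * l) * Ψ (x - 1) 0 := by
      have h := congrFun (congrFun hU (x - 1)) 0
      simp only [Uact, Matrix.cons_val_zero, Pi.smul_apply, smul_eq_mul] at h
      rw [sub_add_cancel] at h
      rw [coinM_mulVec0] at h
      exact h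
    have e1 : Complex.exp (Complex.I * Δ x)
          * (-(starRingEnd ℂ (β x)) * Ψ x 0 + starRingEnd ℂ (α x) * Ψ x 1)
        = Complex.exp (Complex.I * l) * Ψ (x + 1) 1 := by
      have h := congrFun (congrFun hU (x + 1)) 1
      simp only [Uact, Matrix.cons_val_one, Matrix.head_cons, Pi.smul_apply, smul_eq_mul] at h
      rw [add_sub_cancel_right] at h
      rw [coinM_mulVec1] at h
      exact h
    have hstep := rec_step (α x) (β x) (Δ x) l (hα x) (hαβ x)
      (Ψ (x - 1) 0) (Ψ x 0) (Ψ x 1) (Ψ (x + 1) 1) e0 e1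
    show (![Ψ (x + 1 - 1) 0, Ψ (x + 1) 1] : Fin 2 → ℂ) = (T x).mulVec ![Ψ (x - 1) 0, Ψ x 1]
    rw [add_sub_cancel_right, hstep]
  have hTdet : ∀ x : ℤ, (T x).det ≠ 0 := by
    intro x
    rw [hT_def]
    simp only
    rw [det_transferM (α x) (β x) (Δ x) l (hα x) (hαβ x)]
    exact div_ne_zero (by simpa using hα x) (hα x)
  have hTinv : ∀ x : ℤ, (T x)⁻¹ * T x = 1 := fun x =>
    transferM_inv (α x) (β x) (Δ x) l (hα x) (hαβ x)
  -- v never vanishes at 0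
  have hv0 : v 0 ≠ 0 := by
    intro h0
    apply hΨ0
    have hzero : ∀ x : ℤ, v x = 0 := by
      intro x
      rcases le_or_gt 0 x with hx | hx
      · have := v_pos T v hrec x.toNat
        rw [Int.toNat_of_nonneg hx] at this
        rw [this, h0, Matrix.mulVec_zero]
      · have := v_neg T v hrec hTinv x.natAbs
        have hna : ((x.natAbs : ℤ)) = -x := by omega
        rw [hna, neg_neg] at this
        rw [this, h0, Matrix.mulVec_zero]
    funext x i
    fin_cases i
    · have := congrFun (hzero (x + 1)) 0
      simpa [hv_def, add_sub_cancel_right] using this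
    · have := congrFun (hzero x) 1
      simpa [hv_def] using this
  -- v xp and v xm are nonzero
  have hvp_eq : v xp = (prodZpos T xp.toNat).mulVec (v 0) := by
    have := v_pos T v hrec xp.toNat
    rwa [Int.toNat_of_nonneg hxp] at this
  have hvm_eq : v xm = (prodZneg T xm.natAbs).mulVec (v 0) := by
    have := v_neg T v hrec hTinv xm.natAbs
    have hna : ((xm.natAbs : ℤ)) = -xm := by omega
    rwa [hna, neg_neg] at this
  have hdetZpos : (prodZpos T xp.toNat).det ≠ 0 := by
    rw [prodZpos_eq]
    exact det_prodRevN_ne _ _ (fun k _ => hTdet _)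
  have hdetZneg : (prodZneg T xm.natAbs).det ≠ 0 := det_prodZneg_ne T xm.natAbs hTdet
  have hvxp : v xp ≠ 0 := by
    intro h
    apply hv0
    have h1 := Matrix.nonsing_inv_mul _ (isUnit_iff_ne_zero.mpr hdetZpos)
    have h2 : ((prodZpos T xp.toNat)⁻¹).mulVec (v xp) = v 0 := by
      rw [hvp_eq, Matrix.mulVec_mulVec, h1, Matrix.one_mulVec]
    rw [← h2, h, Matrix.mulVec_zero]
  have hvxm : v xm ≠ 0 := by
    intro h
    apply hv0
    have h1 := Matrix.nonsing_inv_mul _ (isUnit_iff_ne_zero.mpr hdetZneg)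
    have h2 : ((prodZneg T xm.natAbs)⁻¹).mulVec (v xm) = v 0 := by
      rw [hvm_eq, Matrix.mulVec_mulVec, h1, Matrix.one_mulVec]
    rw [← h2, h, Matrix.mulVec_zero]
  -- ====== plus side ======
  set Tp : ℕ → Matrix (Fin 2) (Fin 2) ℂ := fun k => transferM (αp k) (βp k) (Δp k) l
    with hTp_def
  set Pp : Matrix (Fin 2) (Fin 2) ℂ := prodRev Tp np with hPp_def
  set Pα : ℂ := ∏ i ∈ Finset.range np, αp i with hPα_def
  have hPα0 : Pα ≠ 0 :=
    Finset.prod_ne_zero_iff.mpr (fun i hi => hαp i (Finset.mem_range.mp hi))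
  have hpa : ∏ i ∈ Finset.range np, ‖αp i‖ ^ 2 = ‖Pα‖ ^ 2 := by
    rw [hPα_def, norm_prod, Finset.prod_pow]
  have htr : (Adef αp Tp np : ℂ) = (1 / 2 : ℂ) * Pα * Pp.trace :=
    Adef_eq αp Tp np (fun k hk => selfD_smul_transferM (αp k) (βp k) (Δp k) l (hαp k hk))
  have htr' : Pp.trace = 2 * (Adef αp Tp np : ℂ) / Pα := by
    rw [eq_div_iff hPα0]
    linear_combination (-2) * htr
  have hdetPp : Pp.det = starRingEnd ℂ Pα / Pα := by
    rw [hPp_def, det_prodRev,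
      Finset.prod_congr rfl (fun i hi => det_transferM (αp i) (βp i) (Δp i) l
        (hαp i (Finset.mem_range.mp hi)) (hαβp i (Finset.mem_range.mp hi))),
      Finset.prod_div_distrib, hPα_def, map_prod]
  -- periodic iteration on the plus side
  have hiterp : ∀ m : ℕ, v (xp + (m : ℤ) * (np : ℤ)) = (Pp ^ m).mulVec (v xp) := by
    intro m
    induction m with
    | zero => simp
    | succ m ih =>
        have hc := rec_prod T v hrec (xp + (m : ℤ) * (np : ℤ)) np
        have hcong : prodRev (fun j : ℕ => T (xp + (m : ℤ) * (np : ℤ) + j)) np = Pp := by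
          rw [hPp_def]
          apply prodRev_congr
          intro j hj
          have hx : xp ≤ xp + (m : ℤ) * (np : ℤ) + j := by
            have h0 : (0 : ℤ) ≤ (m : ℤ) * (np : ℤ) + j := by positivity
            linarith
          obtain ⟨ha', hb', hd'⟩ := hper_p _ hx
          have hidx : ((xp + (m : ℤ) * (np : ℤ) + j - xp) % (np : ℤ)).toNat = j := by
            have h1 : xp + (m : ℤ) * (np : ℤ) + j - xp = j + (m : ℤ) * (np : ℤ) := by ring
            rw [h1, Int.add_mul_emod_self_right]
            rw [Int.emod_eq_of_lt (by positivity) (by exact_mod_cast hj)]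
            simp
          rw [hidx] at ha' hb' hd'
          rw [hT_def]
          simp only
          rw [ha', hb', hd']
        rw [hcong] at hc
        have harg : xp + ((m : ℕ) + 1 : ℕ) * (np : ℤ) = xp + (m : ℤ) * (np : ℤ) + np := by
          push_cast; ring
        rw [harg, hc, ih, Matrix.mulVec_mulVec, ← pow_succ']
  have hdecayp : Tendsto (fun m : ℕ => (Pp ^ m).mulVec (v xp)) atTop (nhds 0) := by
    have hnp0 : ((np : ℤ)) ≠ 0 := by exact_mod_cast hnp.ne'
    have h1 : Tendsto (fun m : ℕ => v (xp + (m : ℤ) * (np : ℤ))) atTop (nhds 0) := by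
      have := v_tendsto Ψ hsum (fun m : ℕ => xp + (m : ℤ) * (np : ℤ))
        (inj_affine xp np hnp0) ?_
      · exact this
      · have : (fun m : ℕ => xp + (m : ℤ) * (np : ℤ) - 1)
            = fun m : ℕ => (xp - 1) + (m : ℤ) * (np : ℤ) := by funext m; ring
        rw [this]
        exact inj_affine (xp - 1) np hnp0
    exact Tendsto.congr (fun m => hiterp m) h1
  -- case analysis on the plus side
  rcases le_or_gt ((Adef αp Tp np) ^ 2) (‖Pα‖ ^ 2) with hcasep | hcasep
  · exfalso
    obtain ⟨μ₁, μ₂, hm1, hm2, hms, hmp⟩ := elliptic Pα hPα0 (Adef αp Tp np) hcasep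
    exact contra_lemma Pp μ₁ μ₂ hm1 hm2
      (fac2 Pp μ₁ μ₂ (by rw [hms, htr']) (by rw [hmp, hdetPp])) (v xp) hvxp hdecayp
  obtain ⟨hzsum_p, hzprod_p, hzabs1_p, hzabs2_p⟩ :=
    hyperbolic Pα hPα0 (Adef αp Tp np) hcasep
  have hz1p : zetaLT αp Tp np
      = ((Adef αp Tp np : ℂ) - ((Real.sign (Adef αp Tp np)
          * Real.sqrt ((Adef αp Tp np) ^ 2 - ‖Pα‖ ^ 2) : ℝ) : ℂ)) / Pα := by
    rw [zetaLT, hpa, ← hPα_def]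
  have hz2p : zetaGT αp Tp np
      = ((Adef αp Tp np : ℂ) + ((Real.sign (Adef αp Tp np)
          * Real.sqrt ((Adef αp Tp np) ^ 2 - ‖Pα‖ ^ 2) : ℝ) : ℂ)) / Pα := by
    rw [zetaGT, hpa, ← hPα_def]
  rw [← hz1p, ← hz2p] at hzsum_p hzprod_p
  rw [← hz1p] at hzabs1_p
  rw [← hz2p] at hzabs2_p
  have hfacp : (Pp - zetaLT αp Tp np • 1) * (Pp - zetaGT αp Tp np • 1) = 0 :=
    fac2 Pp _ _ (by rw [hzsum_p, htr']) (by rw [hzprod_p, hdetPp])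
  have hkerp : (Pp - zetaLT αp Tp np • 1).mulVec (v xp) = 0 :=
    hyp_lemma Pp _ _ hfacp (le_of_lt hzabs2_p) (hzabs1_p.trans hzabs2_p) (v xp) hdecayp
  -- ====== minus side ======
  set Tm : ℕ → Matrix (Fin 2) (Fin 2) ℂ := fun k => transferM (αm k) (βm k) (Δm k) l
    with hTm_def
  set Pm : Matrix (Fin 2) (Fin 2) ℂ := prodRev Tm nm with hPm_def
  set Pαm : ℂ := ∏ i ∈ Finset.range nm, αm i with hPαm_def
  have hPαm0 : Pαm ≠ 0 :=
    Finset.prod_ne_zero_iff.mpr (fun i hi => hαm i (Finset.mem_range.mp hi))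
  have hpam : ∏ i ∈ Finset.range nm, ‖αm i‖ ^ 2 = ‖Pαm‖ ^ 2 := by
    rw [hPαm_def, norm_prod, Finset.prod_pow]
  have htrm : (Adef αm Tm nm : ℂ) = (1 / 2 : ℂ) * Pαm * Pm.trace :=
    Adef_eq αm Tm nm (fun k hk => selfD_smul_transferM (αm k) (βm k) (Δm k) l (hαm k hk))
  have htrm' : Pm.trace = 2 * (Adef αm Tm nm : ℂ) / Pαm := by
    rw [eq_div_iff hPαm0]
    linear_combination (-2) * htrm
  have hdetPm : Pm.det = starRingEnd ℂ Pαm / Pαm := by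
    rw [hPm_def, det_prodRev,
      Finset.prod_congr rfl (fun i hi => det_transferM (αm i) (βm i) (Δm i) l
        (hαm i (Finset.mem_range.mp hi)) (hαβm i (Finset.mem_range.mp hi))),
      Finset.prod_div_distrib, hPαm_def, map_prod]
  have hdetPm0 : Pm.det ≠ 0 := by
    rw [hdetPm]
    exact div_ne_zero (by simpa using hPαm0) hPαm0
  have hPminv : Pm⁻¹ * Pm = 1 := Matrix.nonsing_inv_mul _ (isUnit_iff_ne_zero.mpr hdetPm0)
  -- periodic iteration on the minus side
  have hstepm : ∀ m : ℕ,
      v (xm + (m : ℤ) * (-(nm : ℤ))) = Pm.mulVec (v (xm + ((m : ℕ) + 1 : ℕ) * (-(nm : ℤ)))) := by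
    intro m
    have hc := rec_prod T v hrec (xm + ((m : ℕ) + 1 : ℕ) * (-(nm : ℤ))) nm
    have hcong : prodRev
        (fun j : ℕ => T (xm + ((m : ℕ) + 1 : ℕ) * (-(nm : ℤ)) + j)) nm = Pm := by
      rw [hPm_def]
      apply prodRev_congr
      intro j hj
      have hj' : (j : ℤ) < nm := by exact_mod_cast hj
      have hx : xm + ((m : ℕ) + 1 : ℕ) * (-(nm : ℤ)) + j < xm := by
        have h0 : (0 : ℤ) ≤ (m : ℤ) * (nm : ℤ) := by positivity
        push_cast
        nlinarith
      obtain ⟨ha', hb', hd'⟩ := hper_m _ hx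
      have hidx : ((xm + ((m : ℕ) + 1 : ℕ) * (-(nm : ℤ)) + j - xm) % (nm : ℤ)).toNat = j := by
        have h1 : xm + ((m : ℕ) + 1 : ℕ) * (-(nm : ℤ)) + j - xm
            = j + (-(((m : ℕ) + 1 : ℕ) : ℤ)) * (nm : ℤ) := by push_cast; ring
        rw [h1, Int.add_mul_emod_self_right]
        rw [Int.emod_eq_of_lt (by positivity) hj']
        simp
      rw [hidx] at ha' hb' hd'
      rw [hT_def]
      simp only
      rw [ha', hb', hd']
    rw [hcong] at hc
    have harg : xm + ((m : ℕ) + 1 : ℕ) * (-(nm : ℤ)) + nm = xm + (m : ℤ) * (-(nm : ℤ)) := by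
      push_cast; ring
    rw [harg] at hc
    exact hc
  have hiterm : ∀ m : ℕ, v (xm + (m : ℤ) * (-(nm : ℤ))) = ((Pm⁻¹) ^ m).mulVec (v xm) := by
    intro m
    induction m with
    | zero => simp
    | succ m ih =>
        have h1 := hstepm m
        have h2 : (Pm⁻¹).mulVec (v (xm + (m : ℤ) * (-(nm : ℤ))))
            = v (xm + ((m : ℕ) + 1 : ℕ) * (-(nm : ℤ))) := by
          rw [h1, Matrix.mulVec_mulVec, hPminv, Matrix.one_mulVec]
        rw [← h2, ih, Matrix.mulVec_mulVec, ← pow_succ']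
  have hdecaym : Tendsto (fun m : ℕ => ((Pm⁻¹) ^ m).mulVec (v xm)) atTop (nhds 0) := by
    have hnm0 : (-(nm : ℤ)) ≠ 0 := by
      simp only [neg_ne_zero]
      exact_mod_cast hnm.ne'
    have h1 : Tendsto (fun m : ℕ => v (xm + (m : ℤ) * (-(nm : ℤ)))) atTop (nhds 0) := by
      have := v_tendsto Ψ hsum (fun m : ℕ => xm + (m : ℤ) * (-(nm : ℤ)))
        (inj_affine xm (-(nm : ℤ)) hnm0) ?_
      · exact this
      · have : (fun m : ℕ => xm + (m : ℤ) * (-(nm : ℤ)) - 1)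
            = fun m : ℕ => (xm - 1) + (m : ℤ) * (-(nm : ℤ)) := by funext m; ring
        rw [this]
        exact inj_affine (xm - 1) (-(nm : ℤ)) hnm0
    exact Tendsto.congr (fun m => hiterm m) h1
  -- case analysis on the minus side
  rcases le_or_gt ((Adef αm Tm nm) ^ 2) (‖Pαm‖ ^ 2) with hcasem | hcasem
  · exfalso
    obtain ⟨μ₁, μ₂, hm1, hm2, hms, hmp⟩ := elliptic Pαm hPαm0 (Adef αm Tm nm) hcasem
    have hμ₁0 : μ₁ ≠ 0 := by intro h; rw [h] at hm1; simp at hm1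
    have hμ₂0 : μ₂ ≠ 0 := by intro h; rw [h] at hm2; simp at hm2
    have hfinv := inv_fac Pm hdetPm0 μ₁ μ₂ hμ₁0 hμ₂0
      (by rw [hms, htrm']) (by rw [hmp, hdetPm])
    exact contra_lemma (Pm⁻¹) μ₂⁻¹ μ₁⁻¹ (by rw [norm_inv, hm2, inv_one])
      (by rw [norm_inv, hm1, inv_one]) hfinv (v xm) hvxm hdecaym
  obtain ⟨hzsum_m, hzprod_m, hzabs1_m, hzabs2_m⟩ :=
    hyperbolic Pαm hPαm0 (Adef αm Tm nm) hcasem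
  have hz1m : zetaLT αm Tm nm
      = ((Adef αm Tm nm : ℂ) - ((Real.sign (Adef αm Tm nm)
          * Real.sqrt ((Adef αm Tm nm) ^ 2 - ‖Pαm‖ ^ 2) : ℝ) : ℂ)) / Pαm := by
    rw [zetaLT, hpam, ← hPαm_def]
  have hz2m : zetaGT αm Tm nm
      = ((Adef αm Tm nm : ℂ) + ((Real.sign (Adef αm Tm nm)
          * Real.sqrt ((Adef αm Tm nm) ^ 2 - ‖Pαm‖ ^ 2) : ℝ) : ℂ)) / Pαm := by
    rw [zetaGT, hpam, ← hPαm_def]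
  rw [← hz1m, ← hz2m] at hzsum_m hzprod_m
  rw [← hz1m] at hzabs1_m
  rw [← hz2m] at hzabs2_m
  have hzprod_ne : zetaLT αm Tm nm * zetaGT αm Tm nm ≠ 0 := by
    rw [hzprod_m]
    exact div_ne_zero (by simpa using hPαm0) hPαm0
  have hz1m0 : zetaLT αm Tm nm ≠ 0 := left_ne_zero_of_mul hzprod_ne
  have hz2m0 : zetaGT αm Tm nm ≠ 0 := right_ne_zero_of_mul hzprod_ne
  have habs1m0 : 0 < ‖zetaLT αm Tm nm‖ := norm_pos_iff.mpr hz1m0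
  have hfinvm := inv_fac Pm hdetPm0 _ _ hz1m0 hz2m0
    (by rw [hzsum_m, htrm']) (by rw [hzprod_m, hdetPm])
  have hkerQ : ((Pm⁻¹) - (zetaGT αm Tm nm)⁻¹ • 1).mulVec (v xm) = 0 := by
    apply hyp_lemma (Pm⁻¹) _ ((zetaLT αm Tm nm)⁻¹) hfinvm ?_ ?_ (v xm) hdecaym
    · rw [norm_inv]
      rw [le_inv_comm₀ one_pos habs1m0]
      simpa using le_of_lt hzabs1_m
    · rw [norm_inv, norm_inv]
      have h2' : (‖zetaGT αm Tm nm‖)⁻¹ < 1 := by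
        rw [inv_lt_one_iff₀]
        right
        exact hzabs2_m
      have h1' : 1 < (‖zetaLT αm Tm nm‖)⁻¹ := by
        rw [lt_inv_comm₀ one_pos habs1m0]
        simpa using hzabs1_m
      linarith
  have hkerm : (Pm - zetaGT αm Tm nm • 1).mulVec (v xm) = 0 :=
    eig_of_inv_eig Pm hdetPm0 _ hz2m0 (v xm) hkerQ
  -- ====== final assembly ======
  have hMp0 : ((Pp - zetaLT αp Tp np • 1) * prodZpos T xp.toNat).mulVec (v 0) = 0 := by
    rw [← Matrix.mulVec_mulVec, ← hvp_eq, hkerp]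
  have hMm0 : ((Pm - zetaGT αm Tm nm • 1) * prodZneg T xm.natAbs).mulVec (v 0) = 0 := by
    rw [← Matrix.mulVec_mulVec, ← hvm_eq, hkerm]
  have hzne_p : zetaLT αp Tp np ≠ zetaGT αp Tp np := by
    intro h
    rw [h] at hzabs1_p
    linarith
  have hzne_m : zetaLT αm Tm nm ≠ zetaGT αm Tm nm := by
    intro h
    rw [h] at hzabs1_m
    linarith
  have htrace_scalar : ∀ (z : ℂ), ((z • (1 : Matrix (Fin 2) (Fin 2) ℂ)).trace) = 2 * z := by
    intro z
    rw [Matrix.trace_smul, Matrix.trace_one]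
    simp
    ring
  have hMpne : (Pp - zetaLT αp Tp np • 1) * prodZpos T xp.toNat ≠ 0 := by
    intro h
    have hTpinv := Matrix.mul_nonsing_inv _ (isUnit_iff_ne_zero.mpr hdetZpos)
    have h2 : Pp - zetaLT αp Tp np • 1 = 0 := by
      have h3 := congrArg (fun M => M * (prodZpos T xp.toNat)⁻¹) h
      simp only [Matrix.zero_mul] at h3
      rw [Matrix.mul_assoc, hTpinv, Matrix.mul_one] at h3
      exact h3
    have h4 : Pp = zetaLT αp Tp np • 1 := sub_eq_zero.mp h2
    have h5 : Pp.trace = 2 * zetaLT αp Tp np := by rw [h4, htrace_scalar]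
    have h6 : zetaGT αp Tp np = zetaLT αp Tp np := by
      have := hzsum_p
      rw [← htr', h5] at this
      linear_combination this
    exact hzne_p h6.symm
  have hMmne : (Pm - zetaGT αm Tm nm • 1) * prodZneg T xm.natAbs ≠ 0 := by
    intro h
    have hTminv := Matrix.mul_nonsing_inv _ (isUnit_iff_ne_zero.mpr hdetZneg)
    have h2 : Pm - zetaGT αm Tm nm • 1 = 0 := by
      have h3 := congrArg (fun M => M * (prodZneg T xm.natAbs)⁻¹) h
      simp only [Matrix.zero_mul] at h3
      rw [Matrix.mul_assoc, hTminv, Matrix.mul_one] at h3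
      exact h3
    have h4 : Pm = zetaGT αm Tm nm • 1 := sub_eq_zero.mp h2
    have h5 : Pm.trace = 2 * zetaGT αm Tm nm := by rw [h4, htrace_scalar]
    have h6 : zetaLT αm Tm nm = zetaGT αm Tm nm := by
      have := hzsum_m
      rw [← htrm', h5] at this
      linear_combination this
    exact hzne_m h6
  rw [ker_eq_span _ (v 0) hv0 hMpne hMp0, ker_eq_span _ (v 0) hv0 hMmne hMm0]
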